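/- Let Σ be a finite alphabet with |Σ| = C, let φ be a non-erasing morphism over Σ of width t ≥ 2, let a ∈ Σ satisfy φ(a) = a·w with w nonempty, and let τ : Σ → {0,1} be a coding. Suppose that for some integers d ≥ 0 and n ≥ 15 the string 0^n·1 is a prefix of τ(φ^d(a)). Then max(t, C) ≥ ln(n+1) / (2·ln(ln(n+1))), where ln denotes the natural logarithm. (Hence the size of any prolongable L-system generating 0^n 1 is Ω(log n / log log n).) -/

import Mathlib

/-- if |Σ| = C, φ is non-erasing of width t ≥ 2, φ(a) = a·w with
    w nonempty, τ : Σ → {0,1} is a coding, and 0^n·1 (n ≥ 15) is a prefix of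
    τ(φ^d(a)) for some d ≥ 0, then max(t, C) ≥ ln(n+1) / (2·ln(ln(n+1))).
    (Bits are modeled by `Bool`, with 0 = `false` and 1 = `true`.) -/
theorem stmt9 {α : Type} [Fintype α] (C : ℕ) (hC : Fintype.card α = C)
    (t : ℕ) (ht : 2 ≤ t) (f : α → List α) (hne : ∀ b : α, f b ≠ [])
    (hwidth : Finset.univ.sup (fun b : α => (f b).length) = t)
    (a : α) (w : List α) (hw : w ≠ []) (hfa : f a = a :: w)
    (τ : α → Bool) (d n : ℕ) (hn : 15 ≤ n)
    (hpre : (List.replicate n false ++ [true]) <+: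
      ((fun l => l.flatMap f)^[d] [a]).map τ) :
    Real.log (n + 1) / (2 * Real.log (Real.log (n + 1))) ≤ max (t : ℝ) (C : ℝ) := by
  classical
  set g : List α → List α := fun l => l.flatMap f with hg
  -- each letter has image of length ≤ t
  have hflen : ∀ b : α, (f b).length ≤ t := by
    intro b
    have := Finset.le_sup (f := fun b : α => (f b).length) (Finset.mem_univ b)
    rwa [hwidth] at this
  -- length bound
  have hglen : ∀ l : List α, (g l).length ≤ t * l.length := by
    intro l
    have h1 : (l.map (List.length ∘ f)).sum ≤ (l.map (List.length ∘ f)).length • t :=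
      List.sum_le_card_nsmul _ _ (by
        intro x hx
        obtain ⟨b, _, rfl⟩ := List.mem_map.mp hx
        exact hflen b)
    simpa [hg, List.length_flatMap, smul_eq_mul, Nat.mul_comm, Function.comp_def] using h1
  have hlen : ∀ k : ℕ, (g^[k] [a]).length ≤ t ^ k := by
    intro k
    induction k with
    | zero => simp
    | succ k ih =>
      rw [Function.iterate_succ_apply']
      calc (g (g^[k] [a])).length ≤ t * (g^[k] [a]).length := hglen _
        _ ≤ t * t ^ k := Nat.mul_le_mul_left _ ih
        _ = t ^ (k + 1) := by ring
  -- prefix monotonicity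
  have hgpre : ∀ u v : List α, u <+: v → g u <+: g v := by
    rintro u v ⟨s, rfl⟩
    exact ⟨s.flatMap f, by simp [hg, List.flatMap_append]⟩
  have hitpre : ∀ (k : ℕ) (u v : List α), u <+: v → g^[k] u <+: g^[k] v := by
    intro k
    induction k with
    | zero => intro u v h; simpa using h
    | succ k ih =>
      intro u v h
      rw [Function.iterate_succ_apply, Function.iterate_succ_apply]
      exact ih _ _ (hgpre _ _ h)
  have ha1 : [a] <+: g [a] := by
    refine ⟨w, ?_⟩
    simp [hg, hfa]
  have hstep : ∀ k : ℕ, g^[k] [a] <+: g^[k+1] [a] := by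
    intro k
    rw [Function.iterate_succ_apply]
    exact hitpre k _ _ ha1
  have hmono : ∀ k k' : ℕ, k ≤ k' → g^[k] [a] <+: g^[k'] [a] := by
    intro k k' hkk
    induction k' with
    | zero => simp [Nat.le_zero.mp hkk]
    | succ k' ih =>
      rcases Nat.lt_or_ge k (k' + 1) with h | h
      · exact (ih (Nat.lt_succ_iff.mp h)).trans (hstep k')
      · have : k = k' + 1 := le_antisymm hkk h
        simp [this]
  -- the sets of letters appearing
  set A : ℕ → Finset α := fun k => (g^[k] [a]).toFinset with hA
  have hAmem : ∀ (k : ℕ) (b : α), b ∈ A k ↔ b ∈ g^[k] [a] := by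
    intro k b; simp [hA]
  have hAstep : ∀ k : ℕ, A (k + 1) = (A k).biUnion (fun c => (f c).toFinset) := by
    intro k
    ext b
    simp only [hAmem, Finset.mem_biUnion, hAmem, List.mem_toFinset]
    rw [Function.iterate_succ_apply']
    simp [hg, List.mem_flatMap]
  have hAmono : ∀ k : ℕ, A k ⊆ A (k + 1) := by
    intro k b hb
    rw [hAmem] at hb ⊢
    exact (hstep k).subset hb
  have hCpos : 1 ≤ C := by
    rw [← hC]
    exact Fintype.card_pos_iff.mpr ⟨a⟩
  -- pigeonhole: stabilization within C steps
  have hstab_exists : ∃ k, k < C ∧ A k = A (k + 1) := by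
    by_contra h
    push_neg at h
    have hcard : ∀ k : ℕ, k ≤ C → k + 1 ≤ (A k).card := by
      intro k
      induction k with
      | zero =>
        intro _
        have : a ∈ A 0 := by rw [hAmem]; simp
        exact Finset.card_pos.mpr ⟨a, this⟩
      | succ k ih =>
        intro hk
        have hk' : k < C := Nat.lt_of_succ_le hk
        have hss : A k ⊂ A (k + 1) := (hAmono k).ssubset_of_ne (h k hk')
        have := Finset.card_lt_card hss
        have := ih (Nat.le_of_lt hk')
        omega
    have h1 := hcard C le_rfl
    have h2 : (A C).card ≤ C := hC ▸ Finset.card_le_univ _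
    omega
  obtain ⟨k, hkC, hkstab⟩ := hstab_exists
  have hstab : ∀ j : ℕ, k ≤ j → A j = A k := by
    intro j hj
    induction j with
    | zero => rw [Nat.le_zero.mp hj]
    | succ j ih =>
      rcases Nat.lt_or_ge k (j + 1) with h | h
      · have hjk : k ≤ j := Nat.lt_succ_iff.mp h
        rw [hAstep, ih hjk, ← hAstep, ← hkstab]
      · exact (le_antisymm hj h) ▸ rfl
  -- a true letter exists in g^[d] [a]
  have htrue : ∃ b : α, b ∈ g^[d] [a] ∧ τ b = true := by
    have hmem : true ∈ (g^[d] [a]).map τ := by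
      apply hpre.subset
      simp
    obtain ⟨b, hb, hb2⟩ := List.mem_map.mp hmem
    exact ⟨b, hb, hb2⟩
  obtain ⟨b, hbd, hbτ⟩ := htrue
  set k0 := min k d with hk0
  have hb0 : b ∈ g^[k0] [a] := by
    rcases le_total d k with h | h
    · rw [hk0, min_eq_right h]; exact hbd
    · rw [hk0, min_eq_left h]
      rw [← hAmem, ← hstab d h, hAmem]
      exact hbd
  -- n+1 ≤ length of g^[k0] [a]
  have hlen0 : n + 1 ≤ (g^[k0] [a]).length := by
    by_contra h'
    push_neg at h'
    have hlenle : ((g^[k0] [a]).map τ).length ≤ n := by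
      rw [List.length_map]; omega
    have hp1 : (g^[k0] [a]).map τ <+: (g^[d] [a]).map τ :=
      (hmono k0 d (min_le_right k d)).map τ
    have hp2 : (g^[k0] [a]).map τ <+: List.replicate n false ++ [true] :=
      List.prefix_of_prefix_length_le hp1 hpre (by simp; omega)
    have hp3 : (g^[k0] [a]).map τ <+: List.replicate n false :=
      List.prefix_of_prefix_length_le hp2 (List.prefix_append _ _) (by simpa using hlenle)
    have : (true : Bool) ∈ List.replicate n false :=
      hp3.subset (List.mem_map.mpr ⟨b, hb0, hbτ⟩)
    simpa using List.eq_of_mem_replicate this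
  -- conclude n + 1 ≤ t ^ (C - 1) ≤ M ^ M
  set M := max t C with hM
  have hM2 : 2 ≤ M := le_trans ht (le_max_left _ _)
  have hnat : n + 1 ≤ M ^ M := by
    have h1 : n + 1 ≤ t ^ k0 := le_trans hlen0 (hlen k0)
    have h2 : t ^ k0 ≤ t ^ (C - 1) :=
      Nat.pow_le_pow_right (by omega) (by omega)
    have h3 : t ^ (C - 1) ≤ M ^ (C - 1) :=
      Nat.pow_le_pow_left (le_max_left _ _) _
    have h4 : M ^ (C - 1) ≤ M ^ M := by
      refine Nat.pow_le_pow_right (by omega) ?_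
      have : C ≤ M := le_max_right _ _
      omega
    omega
  -- real arithmetic
  have hMcast : max (t : ℝ) (C : ℝ) = (M : ℝ) := by
    simp [hM, Nat.cast_max]
  rw [hMcast]
  set L := Real.log ((n : ℝ) + 1) with hL
  have hn16 : (16 : ℝ) ≤ (n : ℝ) + 1 := by
    have : (15 : ℝ) ≤ (n : ℝ) := by exact_mod_cast hn
    linarith
  have hLge : Real.log 16 ≤ L := Real.log_le_log (by norm_num) hn16
  have hlog16 : Real.exp 1 < Real.log 16 := by
    have h2 : (0.6931471803 : ℝ) < Real.log 2 := Real.log_two_gt_d9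
    have h16 : Real.log 16 = 4 * Real.log 2 := by
      rw [show (16 : ℝ) = 2 ^ 4 by norm_num, Real.log_pow]
      norm_num
    have he : Real.exp 1 < 2.7182818286 := Real.exp_one_lt_d9
    rw [h16]
    linarith
  have hLgtE : Real.exp 1 < L := lt_of_lt_of_le hlog16 hLge
  have hLpos : 0 < L := lt_trans (Real.exp_pos 1) hLgtE
  have hLL1 : 1 < Real.log L := (Real.lt_log_iff_exp_lt hLpos).mpr hLgtE
  set LL := Real.log L with hLL
  have h2LL : 0 < 2 * LL := by linarith
  rw [div_le_iff₀ h2LL]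
  have hMR : (2 : ℝ) ≤ (M : ℝ) := by exact_mod_cast hM2
  have hkey : L ≤ (M : ℝ) * Real.log M := by
    have hcast : ((n : ℝ) + 1) ≤ ((M : ℝ)) ^ M := by
      have : ((n + 1 : ℕ) : ℝ) ≤ ((M ^ M : ℕ) : ℝ) := by exact_mod_cast hnat
      push_cast at this
      linarith
    calc L ≤ Real.log ((M : ℝ) ^ M) :=
          Real.log_le_log (by linarith) hcast
      _ = (M : ℝ) * Real.log M := by rw [Real.log_pow]
  rcases le_or_gt L (M : ℝ) with hcase | hcase
  · nlinarith [mul_le_mul_of_nonneg_left (by linarith : (2 : ℝ) ≤ 2 * LL)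
      (by linarith : (0 : ℝ) ≤ (M : ℝ))]
  · have hlogM : Real.log (M : ℝ) ≤ LL :=
      Real.log_le_log (by linarith) hcase.le
    nlinarith [mul_le_mul_of_nonneg_left hlogM (by linarith : (0 : ℝ) ≤ (M : ℝ)),
      mul_nonneg (by linarith : (0 : ℝ) ≤ (M : ℝ)) (by linarith : (0 : ℝ) ≤ LL)]
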